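/- Let C be a completely pseudo-regular code in a finite simple connected graph Γ, with antipodal set D = C_{ε_C}. Then the C-local and D-local spectra coincide: ev_C Γ = ev_D Γ. -/

import Mathlib

open Finset Polynomial BigOperators
open scoped Classical

noncomputable section

/-- The eigenspace of a real matrix `A` (viewed as an operator on Euclidean space)
for the value `μ`. -/
def eigSp {n : ℕ} (A : Matrix (Fin n) (Fin n) ℝ) (μ : ℝ) :
    Submodule ℝ (EuclideanSpace ℝ (Fin n)) :=
  Module.End.eigenspace (Matrix.toEuclideanLin A) μ

/-- Orthogonal projection onto the `μ`-eigenspace of `A`. -/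
def eigProj {n : ℕ} (A : Matrix (Fin n) (Fin n) ℝ) (μ : ℝ) (v : EuclideanSpace ℝ (Fin n)) :
    EuclideanSpace ℝ (Fin n) :=
  (Submodule.orthogonalProjectionOnto (eigSp A μ) v : EuclideanSpace ℝ (Fin n))

/-- The weighted characteristic vector `ρS = Σ_{i∈S} ν_i e_i`. -/
def rho {n : ℕ} (ν : EuclideanSpace ℝ (Fin n)) (S : Finset (Fin n)) :
    EuclideanSpace ℝ (Fin n) :=
  WithLp.toLp 2 (fun i => if i ∈ S then ν i else 0)

/-- The unit vector `e_S = ρS / ‖ρS‖`. -/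
def unitVec {n : ℕ} (ν : EuclideanSpace ℝ (Fin n)) (S : Finset (Fin n)) :
    EuclideanSpace ℝ (Fin n) :=
  (‖rho ν S‖)⁻¹ • rho ν S

/-- The `S`-local multiplicity of `μ`: `m_S(μ) = ‖E_μ e_S‖²`. -/
def mloc {n : ℕ} (A : Matrix (Fin n) (Fin n) ℝ) (ν : EuclideanSpace ℝ (Fin n))
    (S : Finset (Fin n)) (μ : ℝ) : ℝ :=
  ‖eigProj A μ (unitVec ν S)‖ ^ 2

/-- The `S`-local spectrum: the set of `μ` whose eigenspace sees `ρS`. -/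
def evloc {n : ℕ} (A : Matrix (Fin n) (Fin n) ℝ) (ν : EuclideanSpace ℝ (Fin n))
    (S : Finset (Fin n)) : Set ℝ :=
  {μ | eigProj A μ (rho ν S) ≠ 0}

/-- Distance from a vertex `i` to a set of vertices `S`. -/
def dSet {n : ℕ} (G : SimpleGraph (Fin n)) (S : Finset (Fin n)) (i : Fin n) : ℕ :=
  sInf {k | ∃ j ∈ S, G.dist i j = k}

/-- Eccentricity (covering radius) of a vertex set `S`. -/
def eccS {n : ℕ} (G : SimpleGraph (Fin n)) (S : Finset (Fin n)) : ℕ :=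
  Finset.univ.sup (dSet G S)

/-- The `k`-th subconstituent `S_k = {i : dist(i,S) = k}`. -/
def subcons {n : ℕ} (G : SimpleGraph (Fin n)) (S : Finset (Fin n)) (k : ℕ) :
    Finset (Fin n) :=
  Finset.univ.filter (fun i => dSet G S i = k)

/-- `p(A)·v` for a polynomial `p`, a matrix `A` and a Euclidean vector `v`. -/
def aevalVec {n : ℕ} (A : Matrix (Fin n) (Fin n) ℝ) (p : Polynomial ℝ)
    (v : EuclideanSpace ℝ (Fin n)) : EuclideanSpace ℝ (Fin n) :=
  WithLp.toLp 2 ((Polynomial.aeval A p).mulVec v)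

/-- Moment-like parameter `π_l = ∏_{h≠l} |μ_l − μ_h|` for an enumeration `μ`. -/
def piC {d : ℕ} (μ : Fin (d + 1) → ℝ) (l : Fin (d + 1)) : ℝ :=
  ∏ h ∈ Finset.univ.erase l, |μ l - μ h|

variable {n : ℕ} {A : Matrix (Fin n) (Fin n) ℝ}

lemma toEuc_apply (v : EuclideanSpace ℝ (Fin n)) : Matrix.toEuclideanLin A v = WithLp.toLp 2 (A.mulVec v) := rfl

lemma isSymmetric_of_isSymm (hA : A.IsSymm) : (Matrix.toEuclideanLin A).IsSymmetric := by
  rw [Matrix.isSymmetric_toEuclideanLin_iff]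
  exact Matrix.isHermitian_iff_isSymm.mpr hA

lemma eigProj_linear (μ : ℝ) (a : ℝ) (v w : EuclideanSpace ℝ (Fin n)) :
    eigProj A μ (a • v + w) = a • eigProj A μ v + eigProj A μ w := by
  simp [eigProj]

lemma eigProj_mulVec (hA : A.IsSymm) (μ : ℝ) (v : EuclideanSpace ℝ (Fin n)) :
    eigProj A μ (WithLp.toLp 2 (A.mulVec v)) = μ • eigProj A μ v := by
  have hT := isSymmetric_of_isSymm hA
  refine Submodule.eq_starProjection_of_mem_of_inner_eq_zero
    (Submodule.smul_mem _ μ (Submodule.orthogonalProjectionOnto (eigSp A μ) v).2) (fun w hw => ?_)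
  have hTw : Matrix.toEuclideanLin A w = μ • w := Module.End.mem_eigenspace_iff.mp hw
  have h1 : (@inner ℝ (EuclideanSpace ℝ (Fin n)) _ (WithLp.toLp 2 (A.mulVec v)) w : ℝ) = μ * inner ℝ v w := by
    rw [← toEuc_apply, hT v w, hTw, inner_smul_right]
  have h2 : (@inner ℝ (EuclideanSpace ℝ (Fin n)) _ w (eigProj A μ v) : ℝ) = inner ℝ w v := by
    have h3 := Submodule.inner_orthogonalProjectionOnto_eq_of_mem_left (K := eigSp A μ) ⟨w, hw⟩ v
    rw [Submodule.coe_inner] at h3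
    simpa [eigProj] using h3
  have h2' : (@inner ℝ (EuclideanSpace ℝ (Fin n)) _ (eigProj A μ v) w : ℝ) = inner ℝ v w := by
    rw [real_inner_comm]
    rw [h2]
    exact real_inner_comm v w
  rw [inner_sub_left, h1, inner_smul_left]
  simp only [RCLike.star_def, starRingEnd_apply, star_trivial]
  rw [h2']; ring

lemma eigProj_pow_mulVec (hA : A.IsSymm) (μ : ℝ) (k : ℕ) (v : EuclideanSpace ℝ (Fin n)) :
    eigProj A μ (WithLp.toLp 2 ((A ^ k).mulVec v)) = μ ^ k • eigProj A μ v := by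
  induction k with
  | zero => simp [Matrix.mulVec_one, Matrix.one_mulVec]
  | succ k ih =>
      have : WithLp.toLp 2 ((A ^ (k + 1)).mulVec v)
          = WithLp.toLp 2 (A.mulVec (WithLp.toLp 2 ((A ^ k).mulVec v))) := by
        rw [WithLp.ofLp_toLp, Matrix.mulVec_mulVec, ← pow_succ']
      rw [this, eigProj_mulVec hA, ih, smul_smul, pow_succ']

lemma eigProj_aevalVec (hA : A.IsSymm) (μ : ℝ) (p : Polynomial ℝ) (v : EuclideanSpace ℝ (Fin n)) :
    eigProj A μ (aevalVec A p v) = p.eval μ • eigProj A μ v := by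
  induction p using Polynomial.induction_on' with
  | add p q hp hq =>
      have : aevalVec A (p + q) v = aevalVec A p v + aevalVec A q v := by
        simp [aevalVec, Matrix.add_mulVec]
      rw [this]
      have := eigProj_linear (A := A) μ 1 (aevalVec A p v) (aevalVec A q v)
      simp only [one_smul] at this
      rw [this, hp, hq, eval_add, add_smul]
  | monomial k a =>
      have h1 : aevalVec A (monomial k a) v = a • WithLp.toLp 2 ((A ^ k).mulVec v) := by
        simp [aevalVec, aeval_monomial, Algebra.algebraMap_eq_smul_one, smul_mul_assoc, one_mul,
          Matrix.smul_mulVec]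
      have h2 : eigProj A μ (a • (WithLp.toLp 2 ((A ^ k).mulVec v) : EuclideanSpace ℝ (Fin n)))
          = a • eigProj A μ (WithLp.toLp 2 ((A ^ k).mulVec v)) := by
        simp [eigProj]
      rw [h1, h2, eigProj_pow_mulVec hA, eval_monomial, smul_smul, mul_comm]

lemma inner_eigSp_eq_zero (hA : A.IsSymm) {μ lam : ℝ} (hne : μ ≠ lam)
    {w u : EuclideanSpace ℝ (Fin n)} (hw : w ∈ eigSp A μ) (hu : u ∈ eigSp A lam) :
    (inner ℝ w u : ℝ) = 0 := by
  have hT := isSymmetric_of_isSymm hA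
  have h1 : μ * (inner ℝ w u : ℝ) = lam * inner ℝ w u := by
    have h2 := hT w u
    rw [Module.End.mem_eigenspace_iff.mp hw, Module.End.mem_eigenspace_iff.mp hu,
      inner_smul_left, inner_smul_right] at h2
    simpa using h2
  by_contra h
  have h3 : (μ - lam) * (inner ℝ w u : ℝ) = 0 := by ring_nf; linarith
  rcases mul_eq_zero.mp h3 with h4 | h4
  · exact hne (by linarith)
  · exact h h4

lemma eigProj_eq_zero_of_mem (hA : A.IsSymm) {μ lam : ℝ} (hne : μ ≠ lam)
    {w : EuclideanSpace ℝ (Fin n)} (hw : w ∈ eigSp A μ) : eigProj A lam w = 0 := by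
  have : Submodule.orthogonalProjectionOnto (eigSp A lam) w = 0 := by
    rw [Submodule.orthogonalProjectionOnto_eq_zero_iff]
    rw [Submodule.mem_orthogonal]
    intro u hu
    rw [real_inner_comm]
    exact inner_eigSp_eq_zero hA hne hw hu
  rw [eigProj, this, Submodule.coe_zero]

lemma eigProj_self {μ : ℝ} {w : EuclideanSpace ℝ (Fin n)} (hw : w ∈ eigSp A μ) :
    eigProj A μ w = w :=
  Submodule.starProjection_eq_self_iff.mpr hw

lemma eigProj_mem (μ : ℝ) (v : EuclideanSpace ℝ (Fin n)) : eigProj A μ v ∈ eigSp A μ :=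
  (Submodule.orthogonalProjectionOnto (eigSp A μ) v).2

lemma eq_zero_of_forall_eigProj (hA : A.IsSymm) {v : EuclideanSpace ℝ (Fin n)}
    (h : ∀ μ, eigProj A μ v = 0) : v = 0 := by
  have hT := isSymmetric_of_isSymm hA
  have htop := hT.orthogonalComplement_iSup_eigenspaces_eq_bot
  have hv : v ∈ (⨆ μ, Module.End.eigenspace (Matrix.toEuclideanLin A) μ)ᗮ := by
    rw [Submodule.mem_orthogonal]
    intro u hu
    refine Submodule.iSup_induction _ (motive := fun u => (inner ℝ u v : ℝ) = 0) hu ?_ (by simp) ?_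
    · intro μ x hx
      have hvperp : v ∈ (eigSp A μ)ᗮ := by
        rw [← Submodule.orthogonalProjectionOnto_eq_zero_iff]
        have := h μ
        rw [eigProj] at this
        exact_mod_cast Submodule.coe_eq_zero.mp (by exact_mod_cast this)
      exact (Submodule.mem_orthogonal _ v).mp hvperp x hx
    · intro x y hx hy
      rw [inner_add_left, hx, hy, add_zero]
  rw [htop] at hv
  simpa using hv

variable {G : SimpleGraph (Fin n)} {C : Finset (Fin n)}

lemma dSet_exists (hC : C.Nonempty) (i : Fin n) : ∃ j ∈ C, G.dist i j = dSet G C i := by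
  obtain ⟨j0, hj0⟩ := hC
  exact Nat.sInf_mem (⟨G.dist i j0, j0, hj0, rfl⟩ : {k | ∃ j ∈ C, G.dist i j = k}.Nonempty)

lemma dSet_le {j : Fin n} (hj : j ∈ C) (i : Fin n) : dSet G C i ≤ G.dist i j :=
  Nat.sInf_le ⟨j, hj, rfl⟩

lemma dSet_eq_zero_of_mem {i : Fin n} (hi : i ∈ C) : dSet G C i = 0 :=
  Nat.le_zero.mp (le_trans (dSet_le hi i) (le_of_eq (SimpleGraph.dist_self)))

lemma mem_of_dSet_eq_zero (hconn : G.Connected) (hC : C.Nonempty) {i : Fin n}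
    (h : dSet G C i = 0) : i ∈ C := by
  obtain ⟨j, hj, hd⟩ := dSet_exists (G := G) hC i
  rw [h] at hd
  rwa [hconn.dist_eq_zero_iff.mp hd]

lemma dSet_adj (hconn : G.Connected) (hC : C.Nonempty) {u v : Fin n} (h : G.Adj u v) :
    dSet G C u ≤ dSet G C v + 1 := by
  obtain ⟨j, hj, hd⟩ := dSet_exists (G := G) hC v
  calc dSet G C u ≤ G.dist u j := dSet_le hj u
    _ ≤ G.dist u v + G.dist v j := hconn.dist_triangle
    _ = dSet G C v + 1 := by rw [hd, SimpleGraph.dist_eq_one_iff_adj.mpr h]; ring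

lemma exists_dSet_pred (hconn : G.Connected) (hC : C.Nonempty) {i : Fin n} {m : ℕ}
    (h : dSet G C i = m + 1) : ∃ u, dSet G C u = m := by
  obtain ⟨j, hj, hd⟩ := dSet_exists (G := G) hC i
  rw [h] at hd
  obtain ⟨p, hp⟩ := SimpleGraph.exists_walk_of_dist_ne_zero (by omega : G.dist i j ≠ 0)
  cases p with
  | nil => simp at hd
  | @cons _ u _ hadj q =>
      refine ⟨u, le_antisymm ?_ ?_⟩
      · calc dSet G C u ≤ G.dist u j := dSet_le hj u
          _ ≤ q.length := SimpleGraph.dist_le q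
          _ = m := by simp [SimpleGraph.Walk.length_cons] at hp; omega
      · have h2 := dSet_adj (C := C) hconn hC hadj
        omega

lemma subcons_nonempty (hn : 0 < n) (hconn : G.Connected) (hC : C.Nonempty) :
    ∀ k ≤ eccS G C, (subcons G C k).Nonempty := by
  have hstep : ∀ m : ℕ, (∃ i, dSet G C i = m) → ∀ k ≤ m, ∃ i, dSet G C i = k := by
    intro m
    induction m with
    | zero => intro h k hk; rw [Nat.le_zero.mp hk]; exact h
    | succ m ih =>
        intro h k hk
        rcases Nat.eq_or_lt_of_le hk with h1 | h1
        · rwa [h1]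
        · obtain ⟨i, hi⟩ := h
          exact ih (exists_dSet_pred hconn hC hi) k (by omega)
  intro k hk
  obtain ⟨i0, _, hsup⟩ := Finset.exists_mem_eq_sup Finset.univ
    (Finset.univ_nonempty_iff.mpr (by exact ⟨⟨0, hn⟩⟩)) (dSet G C)
  obtain ⟨i, hi⟩ := hstep (eccS G C) ⟨i0, hsup.symm⟩ k hk
  exact ⟨i, by simp [subcons, hi]⟩

lemma dSet_le_eccS (i : Fin n) : dSet G C i ≤ eccS G C := Finset.le_sup (Finset.mem_univ i)

lemma sum_rho_subcons (ν : EuclideanSpace ℝ (Fin n)) :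
    ∑ k ∈ Finset.range (eccS G C + 1), rho ν (subcons G C k) = ν := by
  ext i
  have hsum : (∑ k ∈ Finset.range (eccS G C + 1), rho ν (subcons G C k)) i
      = ∑ k ∈ Finset.range (eccS G C + 1), rho ν (subcons G C k) i := by
    rw [WithLp.ofLp_sum, Finset.sum_apply]
  rw [hsum]
  rw [Finset.sum_eq_single (dSet G C i)]
  · simp [rho, subcons]
  · intro k _ hk
    simp [rho, subcons]
    intro h; exact absurd h.symm hk
  · intro h
    exact absurd (Finset.mem_range.mpr (by have := dSet_le_eccS (G := G) (C := C) i; omega)) h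

lemma eigProj_smul (μ a : ℝ) (v : EuclideanSpace ℝ (Fin n)) :
    eigProj A μ (a • v) = a • eigProj A μ v := by simp [eigProj]

lemma eigProj_sub (μ : ℝ) (v w : EuclideanSpace ℝ (Fin n)) :
    eigProj A μ (v - w) = eigProj A μ v - eigProj A μ w := by simp [eigProj]

lemma eigProj_sum {α : Type*} (μ : ℝ) (s : Finset α) (f : α → EuclideanSpace ℝ (Fin n)) :
    eigProj A μ (∑ x ∈ s, f x) = ∑ x ∈ s, eigProj A μ (f x) := by
  simp [eigProj]

lemma aevalVec_smul (q : Polynomial ℝ) (a : ℝ) (v : EuclideanSpace ℝ (Fin n)) :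
    aevalVec A q (a • v) = a • aevalVec A q v := by
  simp [aevalVec, Matrix.mulVec_smul]

lemma aevalVec_sum {α : Type*} (s : Finset α) (f : α → Polynomial ℝ)
    (v : EuclideanSpace ℝ (Fin n)) :
    aevalVec A (∑ x ∈ s, f x) v = ∑ x ∈ s, aevalVec A (f x) v := by
  simp only [aevalVec, map_sum]
  induction s using Finset.induction with
  | empty => simp [Matrix.zero_mulVec]
  | insert _ _ hx ih => rw [Finset.sum_insert hx, Finset.sum_insert hx, Matrix.add_mulVec, WithLp.toLp_add, ih]

lemma aevalVec_zero (v : EuclideanSpace ℝ (Fin n)) : aevalVec A 0 v = 0 := by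
  simp [aevalVec, Matrix.zero_mulVec, WithLp.toLp_zero]


theorem code_local_spectra_coincide {n : ℕ} (hn : 0 < n) (G : SimpleGraph (Fin n)) [DecidableRel G.Adj]
    (hconn : G.Connected)
    (ν : EuclideanSpace ℝ (Fin n)) (hν : ∀ i, 0 < ν i) (lam0 : ℝ)
    (hPerron : (G.adjMatrix ℝ).mulVec ν = lam0 • ν)
    (C : Finset (Fin n)) (hC : C.Nonempty)
    (d : ℕ) (hd : d + 1 = (evloc (G.adjMatrix ℝ) ν C).ncard)
    (p : ℕ → Polynomial ℝ)
    (hdeg : ∀ k ≤ d, (p k).natDegree = k)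
    (horth : ∀ k ≤ d, ∀ h ≤ d, k ≠ h →
      (inner ℝ (aevalVec (G.adjMatrix ℝ) (p k) (unitVec ν C))
             (aevalVec (G.adjMatrix ℝ) (p h) (unitVec ν C)) : ℝ) = 0)
    (hnorm : ∀ k ≤ d,
      (inner ℝ (aevalVec (G.adjMatrix ℝ) (p k) (unitVec ν C))
             (aevalVec (G.adjMatrix ℝ) (p k) (unitVec ν C)) : ℝ) = (p k).eval lam0)
    (hcode : ∀ k ≤ eccS G C, rho ν (subcons G C k) = aevalVec (G.adjMatrix ℝ) (p k) (rho ν C)) :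
    evloc (G.adjMatrix ℝ) ν C = evloc (G.adjMatrix ℝ) ν (subcons G C (eccS G C)) := by
  have hA : (G.adjMatrix ℝ).IsSymm := SimpleGraph.isSymm_adjMatrix G
  set A := G.adjMatrix ℝ with hAdef
  set ε := eccS G C with hεdef
  set ρC := rho ν C with hρCdef
  -- ρC ≠ 0
  have hρC_ne : ρC ≠ 0 := by
    obtain ⟨i0, hi0⟩ := hC
    intro h
    have h2 : ρC i0 = 0 := congrArg (fun x => x i0) h
    rw [hρCdef] at h2
    simp only [rho, PiLp.toLp_apply, hi0, if_pos] at h2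
    exact (hν i0).ne' h2
  -- the finite local spectrum
  have hfin : (evloc A ν C).Finite := by
    by_contra h
    rw [Set.Infinite.ncard h] at hd
    omega
  set MF : Finset ℝ := hfin.toFinset with hMFdef
  have hMFcard : MF.card = d + 1 := by
    rw [hMFdef, ← Set.ncard_eq_toFinset_card _ hfin, ← hd]
  have hMFmem : ∀ μ : ℝ, μ ∈ MF ↔ eigProj A μ ρC ≠ 0 := by
    intro μ
    rw [hMFdef, Set.Finite.mem_toFinset]
    rfl
  -- local multiplicities are positive
  have hm_pos : ∀ μ ∈ MF, (0:ℝ) < ‖eigProj A μ ρC‖ ^ 2 := fun μ hμ =>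
    pow_pos (norm_pos_iff.mpr ((hMFmem μ).mp hμ)) 2
  -- spectral decomposition of aevalVec applied to ρC
  have hdecomp : ∀ q : Polynomial ℝ,
      aevalVec A q ρC = ∑ μ ∈ MF, q.eval μ • eigProj A μ ρC := by
    intro q
    have h0 : ∀ lam, eigProj A lam
        (aevalVec A q ρC - ∑ μ ∈ MF, q.eval μ • eigProj A μ ρC) = 0 := by
      intro lam
      rw [eigProj_sub, eigProj_aevalVec hA, eigProj_sum]
      have hterm : ∀ μ ∈ MF, eigProj A lam (q.eval μ • eigProj A μ ρC)
          = if lam = μ then q.eval μ • eigProj A μ ρC else 0 := by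
        intro μ hμ
        rw [eigProj_smul]
        by_cases he : lam = μ
        · subst he; rw [if_pos rfl, eigProj_self (eigProj_mem lam ρC)]
        · rw [if_neg he,
            eigProj_eq_zero_of_mem hA (fun hh => he hh.symm) (eigProj_mem μ ρC), smul_zero]
      rw [Finset.sum_congr rfl hterm, Finset.sum_ite_eq]
      by_cases hlam : lam ∈ MF
      · rw [if_pos hlam, sub_self]
      · have h1 : eigProj A lam ρC = 0 := by
          by_contra hne
          exact hlam ((hMFmem lam).mpr hne)
        rw [if_neg hlam, h1, smul_zero, sub_zero]
    exact sub_eq_zero.mp (eq_zero_of_forall_eigProj hA h0)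
  -- orthogonality of the projections
  have hortho_v : ∀ μ ∈ MF, ∀ lam ∈ MF, μ ≠ lam →
      (inner ℝ (eigProj A μ ρC) (eigProj A lam ρC) : ℝ) = 0 := fun μ _ lam _ hne =>
    inner_eigSp_eq_zero hA hne (eigProj_mem μ ρC) (eigProj_mem lam ρC)
  -- inner product formula
  have hinner : ∀ q r : Polynomial ℝ,
      (inner ℝ (aevalVec A q ρC) (aevalVec A r ρC) : ℝ)
        = ∑ μ ∈ MF, q.eval μ * r.eval μ * ‖eigProj A μ ρC‖ ^ 2 := by
    intro q r
    rw [hdecomp q, hdecomp r, sum_inner]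
    refine Finset.sum_congr rfl fun μ hμ => ?_
    rw [inner_sum, Finset.sum_eq_single μ]
    · rw [inner_smul_left, inner_smul_right, real_inner_self_eq_norm_sq]
      simp only [RCLike.star_def, starRingEnd_apply, star_trivial]
      ring
    · intro lam hlam hne
      rw [inner_smul_left, inner_smul_right, hortho_v μ hμ lam hlam (fun h => hne h.symm)]
      ring
    · intro h; exact absurd hμ h
  -- Perron vector facts
  have hν_ne : ν ≠ 0 := fun h => (hν ⟨0, hn⟩).ne' (congrArg (fun x => x ⟨0, hn⟩) h)
  have hν_mem : ν ∈ eigSp A lam0 :=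
    Module.End.mem_eigenspace_iff.mpr (by rw [toEuc_apply, hPerron]; rfl)
  have hinnerρν : (0:ℝ) < inner ℝ ρC ν := by
    rw [PiLp.inner_apply]
    simp only [RCLike.inner_apply', starRingEnd_apply, star_trivial]
    have : ∀ i, ρC i * ν i = if i ∈ C then ν i * ν i else 0 := by
      intro i
      rw [hρCdef]
      simp only [rho, PiLp.toLp_apply]
      by_cases hi : i ∈ C <;> simp [hi]
    rw [Finset.sum_congr rfl (fun i _ => this i), Finset.sum_ite_mem,
      Finset.univ_inter]
    exact Finset.sum_pos (fun i _ => mul_pos (hν i) (hν i)) hC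
  have hlam0 : lam0 ∈ MF := by
    rw [hMFmem]
    intro h0
    have hproj : Submodule.orthogonalProjectionOnto (eigSp A lam0) ρC = 0 := by
      apply Submodule.coe_eq_zero.mp
      rw [eigProj] at h0
      exact h0
    have hperp : ρC ∈ (eigSp A lam0)ᗮ := Submodule.orthogonalProjectionOnto_eq_zero_iff.mp hproj
    have h1 := (Submodule.mem_orthogonal' _ _).mp hperp ν hν_mem
    exact absurd h1 (ne_of_gt hinnerρν)
  have hEν : ∀ μ, μ ≠ lam0 → eigProj A μ ν = 0 := fun μ hne =>
    eigProj_eq_zero_of_mem hA (fun h => hne h.symm) hν_mem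
  -- scaled orthogonality
  have hnρ : ‖ρC‖ ≠ 0 := norm_ne_zero_iff.mpr hρC_ne
  have haeval_unit : ∀ q : Polynomial ℝ,
      aevalVec A q (unitVec ν C) = ‖ρC‖⁻¹ • aevalVec A q ρC := by
    intro q
    rw [show unitVec ν C = ‖ρC‖⁻¹ • ρC from by rw [unitVec, hρCdef]]
    exact aevalVec_smul q _ ρC
  have horthS : ∀ k ≤ d, ∀ h ≤ d, k ≠ h →
      ∑ μ ∈ MF, (p k).eval μ * (p h).eval μ * ‖eigProj A μ ρC‖ ^ 2 = 0 := by
    intro k hk h hh hne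
    have h1 := horth k hk h hh hne
    rw [haeval_unit, haeval_unit, inner_smul_left, inner_smul_right, hinner] at h1
    simp only [RCLike.star_def, starRingEnd_apply, star_trivial] at h1
    rcases mul_eq_zero.mp h1 with h2 | h2
    · exact absurd h2 (inv_ne_zero hnρ)
    rcases mul_eq_zero.mp h2 with h3 | h3
    · exact absurd h3 (inv_ne_zero hnρ)
    · exact h3
  -- subconstituent vectors are nonzero
  have hsub_ne : ∀ k ≤ ε, rho ν (subcons G C k) ≠ 0 := by
    intro k hk h
    obtain ⟨i, hi⟩ := subcons_nonempty hn hconn hC k hk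
    have h2 : rho ν (subcons G C k) i = 0 := congrArg (fun x => x i) h
    simp only [rho, PiLp.toLp_apply, hi, if_pos] at h2
    exact (hν i).ne' h2
  -- Step A : ε ≤ d
  have hεled : ε ≤ d := by
    have hli : LinearIndependent ℝ
        (fun k : Fin (ε+1) =>
          (WithLp.toLp 2 (fun μ : {x // x ∈ MF} => (p k).eval ↑μ) : EuclideanSpace ℝ {x // x ∈ MF})) := by
      rw [Fintype.linearIndependent_iff]
      intro g hg
      have hpt : ∀ μ ∈ MF, ∑ k : Fin (ε+1), g k * (p (k : ℕ)).eval μ = 0 := by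
        intro μ hμ
        have h1 := congrArg (fun x => x ⟨μ, hμ⟩) hg
        simp only [WithLp.ofLp_sum, Finset.sum_apply] at h1
        simpa using h1
      have hvec : ∑ k : Fin (ε+1), g k • rho ν (subcons G C (k : ℕ)) = 0 := by
        have h2 : ∀ k : Fin (ε+1), g k • rho ν (subcons G C (k : ℕ))
            = ∑ μ ∈ MF, (g k * (p (k : ℕ)).eval μ) • eigProj A μ ρC := by
          intro k
          rw [hcode (k : ℕ) (Nat.lt_succ_iff.mp k.isLt)]
          rw [hdecomp, Finset.smul_sum]
          exact Finset.sum_congr rfl fun μ _ => by rw [smul_smul]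
        rw [Finset.sum_congr rfl (fun k _ => h2 k), Finset.sum_comm]
        refine Finset.sum_eq_zero fun μ hμ => ?_
        rw [← Finset.sum_smul, hpt μ hμ, zero_smul]
      intro k
      have hklt : (k : ℕ) ≤ ε := Nat.lt_succ_iff.mp k.isLt
      obtain ⟨i, hi⟩ := subcons_nonempty hn hconn hC (k : ℕ) hklt
      have hdi : dSet G C i = (k : ℕ) := (Finset.mem_filter.mp hi).2
      have h3 := congrArg (fun x => x i) hvec
      simp only [WithLp.ofLp_sum, Finset.sum_apply] at h3
      rw [Finset.sum_eq_single k] at h3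
      · have h4 : (g k • rho ν (subcons G C (k : ℕ))) i = g k * ν i := by
          simp [rho, hi]
        rw [h4] at h3
        rcases mul_eq_zero.mp h3 with h5 | h5
        · exact h5
        · exact absurd h5 (hν i).ne'
      · intro b _ hbk
        have hb : i ∉ subcons G C (b : ℕ) := by
          simp only [subcons, Finset.mem_filter, Finset.mem_univ, true_and, hdi]
          intro hcon
          exact hbk (Fin.ext hcon.symm)
        simp [rho, hb]
      · intro hcon
        exact absurd (Finset.mem_univ k) hcon
    have hcard := hli.fintype_card_le_finrank
    simp only [Fintype.card_fin, finrank_euclideanSpace, Fintype.card_coe, hMFcard] at hcard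
    omega
  -- Step B : ε = d
  have hεd : ε = d := by
    rcases eq_or_lt_of_le hεled with h | hlt
    · exact h
    exfalso
    set q : Polynomial ℝ := ∑ k ∈ Finset.range (ε+1), p k with hqdef
    have hq : aevalVec A q ρC = ν := by
      rw [hqdef, aevalVec_sum, ← sum_rho_subcons (G := G) (C := C) ν]
      exact Finset.sum_congr rfl fun k hk =>
        (hcode k (Nat.lt_succ_iff.mp (Finset.mem_range.mp hk))).symm
    have hq0 : ∀ μ ∈ MF, μ ≠ lam0 → q.eval μ = 0 := by
      intro μ hμ hne
      have h1 : eigProj A μ (aevalVec A q ρC) = eigProj A μ ν := by rw [hq]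
      rw [eigProj_aevalVec hA, hEν μ hne] at h1
      rcases smul_eq_zero.mp h1 with h2 | h2
      · exact h2
      · exact absurd h2 ((hMFmem μ).mp hμ)
    have hqne : q ≠ 0 := by
      intro h
      rw [h, aevalVec_zero] at hq
      exact hν_ne hq.symm
    have hdegq : q.natDegree ≤ ε := by
      refine Polynomial.natDegree_sum_le_of_forall_le _ _ fun k hk => ?_
      rw [hdeg k (by have := Finset.mem_range.mp hk; omega)]
      exact Nat.lt_succ_iff.mp (Finset.mem_range.mp hk)
    have hsubset : MF.erase lam0 ⊆ q.roots.toFinset := by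
      intro μ hμ
      rw [Multiset.mem_toFinset, Polynomial.mem_roots hqne]
      exact hq0 μ (Finset.mem_of_mem_erase hμ) (Finset.ne_of_mem_erase hμ)
    have hcard2 := Finset.card_le_card hsubset
    rw [Finset.card_erase_of_mem hlam0, hMFcard] at hcard2
    have hc3 := Multiset.toFinset_card_le q.roots
    have hc4 := Polynomial.card_roots' q
    omega
  -- Step D : the top polynomial does not vanish on the local spectrum
  have hpd_ne : ∀ μ ∈ MF, (p d).eval μ ≠ 0 := by
    intro μstar hμstar hp0
    set w : ℝ → ℝ := fun μ => ‖eigProj A μ ρC‖ with hwdef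
    have hw_pos : ∀ μ ∈ MF, 0 < w μ := fun μ hμ => norm_pos_iff.mpr ((hMFmem μ).mp hμ)
    set g : Fin (d+1) → EuclideanSpace ℝ {x // x ∈ MF} :=
      fun k => WithLp.toLp 2 (fun μ => w ↑μ * (p (k : ℕ)).eval ↑μ) with hgdef
    have hgapp : ∀ (k : Fin (d+1)) (μ : {x // x ∈ MF}), g k μ = w ↑μ * (p (k : ℕ)).eval ↑μ :=
      fun k μ => rfl
    have hg_inner : ∀ k h : Fin (d+1), k ≠ h → (inner ℝ (g k) (g h) : ℝ) = 0 := by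
      intro k h hne
      rw [PiLp.inner_apply]
      simp only [RCLike.inner_apply, starRingEnd_apply, star_trivial]
      have h0 := horthS (k : ℕ) (Nat.lt_succ_iff.mp k.isLt) (h : ℕ) (Nat.lt_succ_iff.mp h.isLt)
        (fun hc => hne (Fin.ext hc))
      rw [← Finset.sum_coe_sort MF
        (fun μ => (p (k:ℕ)).eval μ * (p (h:ℕ)).eval μ * ‖eigProj A μ ρC‖ ^ 2)] at h0
      rw [← h0]
      refine Finset.sum_congr rfl fun μ _ => ?_
      rw [hgapp, hgapp, hwdef]
      ring
    have hg_ne : ∀ k : Fin (d+1), g k ≠ 0 := by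
      intro k hk0
      have hk_ε : (k : ℕ) ≤ ε := by rw [hεd]; exact Nat.lt_succ_iff.mp k.isLt
      have hzero : ∀ μ ∈ MF, (p (k:ℕ)).eval μ = 0 := by
        intro μ hμ
        have h1 : g k ⟨μ, hμ⟩ = 0 := by rw [hk0]; rfl
        rw [hgapp] at h1
        rcases mul_eq_zero.mp h1 with h2 | h2
        · exact absurd h2 (hw_pos μ hμ).ne'
        · exact h2
      have haev0 : aevalVec A (p (k:ℕ)) ρC = 0 := by
        rw [hdecomp]
        exact Finset.sum_eq_zero fun μ hμ => by rw [hzero μ hμ, zero_smul]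
      exact hsub_ne (k:ℕ) hk_ε (by rw [hcode (k:ℕ) hk_ε]; exact haev0)
    have hli2 : LinearIndependent ℝ g :=
      linearIndependent_of_ne_zero_of_inner_eq_zero hg_ne (fun k h hne => hg_inner k h hne)
    have hspan : Submodule.span ℝ (Set.range g) = ⊤ :=
      hli2.span_eq_top_of_card_eq_finrank
        (by rw [Fintype.card_fin, finrank_euclideanSpace, Fintype.card_coe, hMFcard])
    set δ : EuclideanSpace ℝ {x // x ∈ MF} :=
      WithLp.toLp 2 (fun μ => if (μ : ℝ) = μstar then w μstar else 0) with hδdef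
    have hδapp : ∀ μ : {x // x ∈ MF}, δ μ = if (μ : ℝ) = μstar then w μstar else 0 :=
      fun μ => rfl
    have hδmem : δ ∈ Submodule.span ℝ (Set.range g) := by rw [hspan]; trivial
    obtain ⟨c, hc⟩ := (Submodule.mem_span_range_iff_exists_fun ℝ).mp hδmem
    set kd : Fin (d+1) := ⟨d, Nat.lt_succ_self d⟩ with hkddef
    have hcd : c kd = 0 := by
      have h1 : (inner ℝ (g kd) δ : ℝ) = 0 := by
        rw [PiLp.inner_apply]
        simp only [RCLike.inner_apply', starRingEnd_apply, star_trivial]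
        rw [Finset.sum_eq_single (⟨μstar, hμstar⟩ : {x // x ∈ MF})]
        · rw [hgapp, hδapp]
          simp only [if_pos]
          rw [hp0]
          ring
        · intro b _ hb
          rw [hδapp, if_neg (fun hcon => hb (Subtype.ext hcon)), mul_zero]
        · intro hcon
          exact absurd (Finset.mem_univ _) hcon
      have h2 : (inner ℝ (g kd) δ : ℝ) = c kd * (inner ℝ (g kd) (g kd) : ℝ) := by
        rw [← hc, inner_sum, Finset.sum_eq_single kd]
        · rw [inner_smul_right]
        · intro b _ hb
          rw [inner_smul_right, hg_inner kd b (Ne.symm hb)]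
          ring
        · intro hcon
          exact absurd (Finset.mem_univ _) hcon
      rw [h1] at h2
      have h3 : (inner ℝ (g kd) (g kd) : ℝ) ≠ 0 :=
        fun h => hg_ne kd (inner_self_eq_zero.mp h)
      rcases mul_eq_zero.mp h2.symm with h4 | h4
      · exact h4
      · exact absurd h4 h3
    set r : Polynomial ℝ := ∑ k : Fin (d+1), Polynomial.C (c k) * p (k : ℕ) with hrdef
    have hr_eval : ∀ μ ∈ MF, r.eval μ = if μ = μstar then 1 else 0 := by
      intro μ hμ
      have h1 := congrArg (fun x => x ⟨μ, hμ⟩) hc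
      simp only [WithLp.ofLp_sum, Finset.sum_apply] at h1
      have h2 : ∑ k : Fin (d+1), (c k • g k) ⟨μ, hμ⟩ = w μ * r.eval μ := by
        rw [hrdef]
        rw [Polynomial.eval_finset_sum]
        rw [Finset.mul_sum]
        refine Finset.sum_congr rfl fun k _ => ?_
        have h3 : (c k • g k) ⟨μ, hμ⟩ = c k * g k ⟨μ, hμ⟩ := rfl
        rw [h3, hgapp]
        simp only [Polynomial.eval_mul, Polynomial.eval_C]
        ring
      have hδapp2 : δ ⟨μ, hμ⟩ = if μ = μstar then w μstar else 0 := rfl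
      rw [h2, hδapp2] at h1
      by_cases hcase : μ = μstar
      · rw [if_pos hcase]
        rw [if_pos hcase] at h1
        rw [hcase] at h1 ⊢
        exact mul_left_cancel₀ (hw_pos μstar hμstar).ne' (by rw [mul_one]; exact h1)
      · rw [if_neg hcase]
        rw [if_neg hcase] at h1
        rcases mul_eq_zero.mp h1 with h4 | h4
        · exact absurd h4 (hw_pos μ hμ).ne'
        · exact h4
    -- r with the top coefficient removed
    have hr' : r = ∑ k ∈ Finset.univ.erase kd, Polynomial.C (c k) * p (k : ℕ) := by
      rw [hrdef]
      exact (Finset.sum_erase _ (by rw [hcd, map_zero, zero_mul])).symm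
    rcases Nat.eq_zero_or_pos d with hd0 | hdpos
    · have hempty : (Finset.univ.erase kd : Finset (Fin (d+1))) = ∅ := by
        rw [Finset.eq_empty_iff_forall_notMem]
        intro k hkmem
        refine (Finset.mem_erase.mp hkmem).1 (Fin.ext ?_)
        have h6 := k.isLt
        omega
      have hr0 : r = 0 := by rw [hr', hempty, Finset.sum_empty]
      have h5 := hr_eval μstar hμstar
      rw [hr0, if_pos rfl] at h5
      simp at h5
    · have hrne : r ≠ 0 := by
        intro h
        have h5 := hr_eval μstar hμstar
        rw [h, if_pos rfl] at h5
        simp at h5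
      have hdegr : r.natDegree ≤ d - 1 := by
        rw [hr']
        refine Polynomial.natDegree_sum_le_of_forall_le _ _ fun k hkmem => ?_
        have hkne : (k : ℕ) ≠ d := by
          intro hcon
          exact (Finset.mem_erase.mp hkmem).1 (Fin.ext hcon)
        have hklt : (k : ℕ) < d := by
          have h6 := k.isLt
          omega
        calc (Polynomial.C (c k) * p (k : ℕ)).natDegree
            ≤ (p (k : ℕ)).natDegree := Polynomial.natDegree_C_mul_le _ _
          _ = (k : ℕ) := hdeg _ (by omega)
          _ ≤ d - 1 := by omega
      have hsubset2 : MF.erase μstar ⊆ r.roots.toFinset := by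
        intro μ hμ
        rw [Multiset.mem_toFinset, Polynomial.mem_roots hrne]
        have h7 := hr_eval μ (Finset.mem_of_mem_erase hμ)
        rw [if_neg (Finset.ne_of_mem_erase hμ)] at h7
        exact h7
      have hcard2 := Finset.card_le_card hsubset2
      rw [Finset.card_erase_of_mem hμstar, hMFcard] at hcard2
      have hc3 := Multiset.toFinset_card_le r.roots
      have hc4 := Polynomial.card_roots' r
      omega
  -- conclusion
  ext μ
  have hD : rho ν (subcons G C ε) = aevalVec A (p ε) ρC := hcode ε le_rfl
  constructor
  · intro hμ
    have hμMF : μ ∈ MF := (hMFmem μ).mpr hμ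
    show eigProj A μ (rho ν (subcons G C ε)) ≠ 0
    rw [hD, hεd]
    rw [eigProj_aevalVec hA]
    exact smul_ne_zero (hpd_ne μ hμMF) ((hMFmem μ).mp hμMF)
  · intro hμ
    show eigProj A μ ρC ≠ 0
    intro h0
    apply hμ
    show eigProj A μ (rho ν (subcons G C ε)) = 0
    rw [hD, eigProj_aevalVec hA, h0, smul_zero]
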